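/- Let 0 < γ < 1 < β < α < 2^{1/γ−1}, and let x = (x_i), y = (y_i) ∈ ℓ_γ with ‖x‖_{ℓ_γ} = 1 and ‖y‖_{ℓ_γ} ≤ β. Then Σ_{i=1}^∞ (|2^{1/γ−1}x_i − y_i|^γ + |2^{1/γ−1}x_i + y_i|^γ) ≥ A(α,β,γ) > 2, where A(α,β,γ) = 2(β/α)^γ + [(2^{1/γ−1}−α)^γ + (2^{1/γ−1}+α)^γ](1 − (β/α)^γ). -/

import Mathlib

open Real

lemma subadd {γ : ℝ} (hγ0 : 0 < γ) (hγ1 : γ ≤ 1) {a b : ℝ} (ha : 0 ≤ a) (hb : 0 ≤ b) :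
    (a + b) ^ γ ≤ a ^ γ + b ^ γ := by
  have h := NNReal.rpow_add_le_add_rpow a.toNNReal b.toNNReal hγ0.le hγ1
  calc (a + b) ^ γ = ((a.toNNReal + b.toNNReal : NNReal) : ℝ) ^ γ := by
        rw [NNReal.coe_add, Real.coe_toNNReal a ha, Real.coe_toNNReal b hb]
    _ = (((a.toNNReal + b.toNNReal) ^ γ : NNReal) : ℝ) := by rw [NNReal.coe_rpow]
    _ ≤ ((a.toNNReal ^ γ + b.toNNReal ^ γ : NNReal) : ℝ) := by exact_mod_cast h
    _ = a ^ γ + b ^ γ := by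
        rw [NNReal.coe_add, NNReal.coe_rpow, NNReal.coe_rpow,
          Real.coe_toNNReal a ha, Real.coe_toNNReal b hb]

lemma strict_subadd {γ : ℝ} (hγ0 : 0 < γ) (hγ1 : γ < 1) {a b : ℝ} (ha : 0 < a) (hb : 0 < b) :
    (a + b) ^ γ < a ^ γ + b ^ γ := by
  have hs : 0 < a + b := by linarith
  have h1 : a / (a + b) < (a / (a + b)) ^ γ := by
    have := Real.rpow_lt_rpow_of_exponent_gt (x := a / (a + b)) (by positivity)
      (by rw [div_lt_one hs]; linarith) hγ1
    rwa [Real.rpow_one] at this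
  have h2 : b / (a + b) < (b / (a + b)) ^ γ := by
    have := Real.rpow_lt_rpow_of_exponent_gt (x := b / (a + b)) (by positivity)
      (by rw [div_lt_one hs]; linarith) hγ1
    rwa [Real.rpow_one] at this
  have ha' : a ^ γ = (a + b) ^ γ * (a / (a + b)) ^ γ := by
    rw [← Real.mul_rpow hs.le (by positivity)]; congr 1; field_simp
  have hb' : b ^ γ = (a + b) ^ γ * (b / (a + b)) ^ γ := by
    rw [← Real.mul_rpow hs.le (by positivity)]; congr 1; field_simp
  have hpos : 0 < (a + b) ^ γ := Real.rpow_pos_of_pos hs γ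
  calc (a + b) ^ γ = (a + b) ^ γ * (a / (a + b) + b / (a + b)) := by field_simp
    _ < (a + b) ^ γ * ((a / (a + b)) ^ γ + (b / (a + b)) ^ γ) := by
        exact mul_lt_mul_of_pos_left (by linarith) hpos
    _ = a ^ γ + b ^ γ := by rw [ha', hb']; ring

lemma concave_step {γ : ℝ} (hγ0 : 0 < γ) (hγ1 : γ < 1) {c α t : ℝ} (hc : 0 < c) (hα : 0 < α)
    (hαc : α < c) (ht0 : 0 ≤ t) (htα : t ≤ α) :
    (c - α) ^ γ + (c + α) ^ γ ≤ (c - t) ^ γ + (c + t) ^ γ := by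
  have conc := Real.concaveOn_rpow hγ0.le hγ1.le
  have hm1 : (c - α) ∈ Set.Ici (0:ℝ) := by simp; linarith
  have hm2 : (c + α) ∈ Set.Ici (0:ℝ) := by simp; linarith
  have hlam : 0 ≤ (α + t) / (2 * α) := by positivity
  have hmu_eq : (α - t) / (2 * α) = 1 - (α + t) / (2 * α) := by field_simp; ring
  have hmu : 0 ≤ (α - t) / (2 * α) := div_nonneg (by linarith) (by positivity)
  have hsum : (α + t) / (2 * α) + (α - t) / (2 * α) = 1 := by field_simp; ring
  have hsum' : (α - t) / (2 * α) + (α + t) / (2 * α) = 1 := by field_simp; ring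
  have h1 := conc.2 hm1 hm2 hlam hmu hsum
  have h2 := conc.2 hm1 hm2 hmu hlam hsum'
  simp only [smul_eq_mul] at h1 h2
  have e1 : (α + t) / (2 * α) * (c - α) + (α - t) / (2 * α) * (c + α) = c - t := by
    field_simp; ring
  have e2 : (α - t) / (2 * α) * (c - α) + (α + t) / (2 * α) * (c + α) = c + t := by
    field_simp; ring
  rw [e1] at h1; rw [e2] at h2
  rw [hmu_eq] at h1 h2
  nlinarith [h1, h2]

lemma abs_pair (γ u v : ℝ) :
    |u - v| ^ γ + |u + v| ^ γ = |(|u| - |v|)| ^ γ + (|u| + |v|) ^ γ := by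
  rcases abs_cases u with ⟨hu, hu'⟩ | ⟨hu, hu'⟩ <;> rcases abs_cases v with ⟨hv, hv'⟩ | ⟨hv, hv'⟩ <;>
    rw [hu, hv]
  · rw [abs_of_nonneg (by linarith : (0:ℝ) ≤ u + v)]
  · rw [sub_neg_eq_add, show u + -v = u - v by ring,
      abs_of_nonneg (by linarith : (0:ℝ) ≤ u - v), add_comm]
  · rw [show -u - v = -(u + v) by ring, abs_neg, show -u + v = v - u by ring,
      ← abs_of_nonneg (by linarith : (0:ℝ) ≤ v - u), abs_sub_comm v u, add_comm]
  · rw [show -u - -v = -(u - v) by ring, abs_neg, show -u + -v = -(u + v) by ring,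
      ← abs_of_nonpos (by linarith : u + v ≤ 0)]
noncomputable section

/-- Membership in the sequence space `ℓ_γ`. -/
def Memlg (γ : ℝ) (x : ℕ → ℝ) : Prop := Summable fun i => |x i| ^ γ

/-- The `ℓ_γ` γ-norm. -/
def lgNorm (γ : ℝ) (x : ℕ → ℝ) : ℝ := (∑' i, |x i| ^ γ) ^ (1/γ)

/-- The constant `A(α,β,γ)`. -/
def Aconst (α β γ : ℝ) : ℝ :=
  2 * (β/α) ^ γ +
    (((2:ℝ) ^ (1/γ - 1) - α) ^ γ + ((2:ℝ) ^ (1/γ - 1) + α) ^ γ) * (1 - (β/α) ^ γ)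

theorem two_point_inequality (γ β α : ℝ) (hγ0 : 0 < γ) (hγ1 : γ < 1)
    (hβ : 1 < β) (hβα : β < α) (hα : α < (2:ℝ) ^ (1/γ - 1))
    (x y : ℕ → ℝ) (hx : Memlg γ x) (hy : Memlg γ y)
    (hx1 : lgNorm γ x = 1) (hyβ : lgNorm γ y ≤ β) :
    2 < Aconst α β γ ∧
      Aconst α β γ ≤
        ∑' i, (|(2:ℝ) ^ (1/γ - 1) * x i - y i| ^ γ +
          |(2:ℝ) ^ (1/γ - 1) * x i + y i| ^ γ) := by
  have hγne : γ ≠ 0 := ne_of_gt hγ0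
  set c : ℝ := (2:ℝ) ^ (1/γ - 1) with hc
  have hα1 : 1 < α := lt_trans hβ hβα
  have hα0 : 0 < α := by linarith
  have hc0 : 0 < c := lt_trans hα0 hα
  -- (2c)^γ = 2
  have h2c : (2 * c) ^ γ = 2 := by
    have e : 2 * c = (2:ℝ) ^ (1/γ) := by
      rw [hc]
      nth_rewrite 1 [← Real.rpow_one (2:ℝ)]
      rw [← Real.rpow_add two_pos]
      ring_nf
    rw [e, ← Real.rpow_mul (by norm_num : (0:ℝ) ≤ 2), one_div, inv_mul_cancel₀ hγne,
      Real.rpow_one]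
  set K : ℝ := (c - α) ^ γ + (c + α) ^ γ with hK
  have hK2 : 2 < K := by
    have h := strict_subadd hγ0 hγ1 (show (0:ℝ) < c - α by linarith)
      (show (0:ℝ) < c + α by linarith)
    rw [show (c - α) + (c + α) = 2 * c by ring, h2c] at h
    exact h
  -- sums of |x|^γ and |y|^γ
  have hxnn : ∀ i, 0 ≤ |x i| ^ γ := fun i => Real.rpow_nonneg (abs_nonneg _) γ
  have hynn : ∀ i, 0 ≤ |y i| ^ γ := fun i => Real.rpow_nonneg (abs_nonneg _) γ
  have hTx0 : 0 ≤ ∑' i, |x i| ^ γ := tsum_nonneg hxnn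
  have hUy0 : 0 ≤ ∑' i, |y i| ^ γ := tsum_nonneg hynn
  have hTx : ∑' i, |x i| ^ γ = 1 := by
    have h := congrArg (fun z : ℝ => z ^ γ) hx1
    simp only [lgNorm] at h
    rwa [← Real.rpow_mul hTx0, one_div, inv_mul_cancel₀ hγne, Real.rpow_one,
      Real.one_rpow] at h
  have hUy : ∑' i, |y i| ^ γ ≤ β ^ γ := by
    have h := Real.rpow_le_rpow (Real.rpow_nonneg hUy0 _) hyβ hγ0.le
    rwa [← Real.rpow_mul hUy0, one_div, inv_mul_cancel₀ hγne, Real.rpow_one] at h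
  -- the summand
  set L : ℕ → ℝ := fun i => |c * x i - y i| ^ γ + |c * x i + y i| ^ γ with hL
  have hLnn : ∀ i, 0 ≤ L i := fun i =>
    add_nonneg (Real.rpow_nonneg (abs_nonneg _) γ) (Real.rpow_nonneg (abs_nonneg _) γ)
  have habs_cx : ∀ i, |c * x i| = c * |x i| := fun i => by
    rw [abs_mul, abs_of_nonneg hc0.le]
  have hterm : ∀ (i : ℕ) (s : ℝ), |c * x i + s * y i| ^ γ ≤ c ^ γ * |x i| ^ γ + |s * y i| ^ γ := by
    intro i s
    calc |c * x i + s * y i| ^ γ ≤ (|c * x i| + |s * y i|) ^ γ :=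
          Real.rpow_le_rpow (abs_nonneg _) (abs_add_le _ _) hγ0.le
      _ ≤ |c * x i| ^ γ + |s * y i| ^ γ := subadd hγ0 hγ1.le (abs_nonneg _) (abs_nonneg _)
      _ = c ^ γ * |x i| ^ γ + |s * y i| ^ γ := by
          rw [habs_cx, Real.mul_rpow hc0.le (abs_nonneg _)]
  have hLsum : Summable L := by
    have hsum1 : Summable fun i => c ^ γ * |x i| ^ γ + |y i| ^ γ := (hx.mul_left _).add hy
    refine Summable.of_nonneg_of_le hLnn (fun i => ?_) (hsum1.add hsum1)
    have h1 := hterm i (-1)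
    have h2 := hterm i 1
    rw [show (-1:ℝ) * y i = -(y i) by ring, abs_neg] at h1
    rw [one_mul] at h2
    rw [show c * x i + -(y i) = c * x i - y i by ring] at h1
    exact add_le_add h1 h2
  -- pointwise lower bounds
  have hL2 : ∀ i, 2 * |x i| ^ γ ≤ L i := by
    intro i
    have key : |2 * c * x i| ^ γ ≤ L i := by
      have e : 2 * c * x i = (c * x i - y i) + (c * x i + y i) := by ring
      calc |2 * c * x i| ^ γ = |(c * x i - y i) + (c * x i + y i)| ^ γ := by rw [e]
        _ ≤ (|c * x i - y i| + |c * x i + y i|) ^ γ :=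
            Real.rpow_le_rpow (abs_nonneg _) (abs_add_le _ _) hγ0.le
        _ ≤ L i := subadd hγ0 hγ1.le (abs_nonneg _) (abs_nonneg _)
    calc 2 * |x i| ^ γ = (2 * c) ^ γ * |x i| ^ γ := by rw [h2c]
      _ = (2 * c * |x i|) ^ γ := (Real.mul_rpow (by positivity) (abs_nonneg _)).symm
      _ = |2 * c * x i| ^ γ := by
          rw [abs_mul (2 * c) (x i), abs_of_nonneg (by positivity : (0:ℝ) ≤ 2 * c)]
      _ ≤ L i := key
  have hLK : ∀ i, |y i| < α * |x i| → K * |x i| ^ γ ≤ L i := by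
    intro i hE
    have hx0 : 0 < |x i| := by
      rcases (abs_nonneg (x i)).eq_or_lt with h | h
      · exfalso; rw [← h, mul_zero] at hE; exact absurd hE (not_lt.2 (abs_nonneg _))
      · exact h
    have hbca : |y i| < c * |x i| := lt_trans hE (by nlinarith)
    rw [hL]
    show K * |x i| ^ γ ≤ |c * x i - y i| ^ γ + |c * x i + y i| ^ γ
    rw [abs_pair γ (c * x i) (y i), habs_cx,
      abs_of_nonneg (by linarith : (0:ℝ) ≤ c * |x i| - |y i|)]
    set t : ℝ := |y i| / |x i| with ht
    have ht0 : 0 ≤ t := div_nonneg (abs_nonneg _) (abs_nonneg _)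
    have htα : t ≤ α := by rw [ht, div_le_iff₀ hx0]; linarith
    have e1 : c * |x i| - |y i| = |x i| * (c - t) := by rw [ht]; field_simp
    have e2 : c * |x i| + |y i| = |x i| * (c + t) := by rw [ht]; field_simp
    rw [e1, e2, Real.mul_rpow hx0.le (by linarith : (0:ℝ) ≤ c - t),
      Real.mul_rpow hx0.le (by linarith : (0:ℝ) ≤ c + t)]
    have hstep := concave_step hγ0 hγ1 hc0 hα0 hα ht0 htα
    have hag : 0 ≤ |x i| ^ γ := Real.rpow_nonneg (abs_nonneg _) _
    rw [hK]
    nlinarith [hstep, hag]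
  -- the split
  set w : ℕ → ℝ := fun i => if α * |x i| ≤ |y i| then |x i| ^ γ else 0 with hw
  have hwnn : ∀ i, 0 ≤ w i := by
    intro i; rw [hw]; dsimp only; split_ifs
    · exact hxnn i
    · exact le_rfl
  have hwle : ∀ i, w i ≤ |x i| ^ γ := by
    intro i; rw [hw]; dsimp only; split_ifs
    · exact le_rfl
    · exact hxnn i
  have hwsum : Summable w := Summable.of_nonneg_of_le hwnn hwle hx
  set W : ℝ := ∑' i, w i with hW
  have hαγ : 0 < α ^ γ := Real.rpow_pos_of_pos hα0 γ
  have hW_le : W ≤ β ^ γ * (α ^ γ)⁻¹ := by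
    have hwle2 : ∀ i, w i ≤ |y i| ^ γ * (α ^ γ)⁻¹ := by
      intro i; rw [hw]; dsimp only; split_ifs with hE
      · rw [← div_eq_mul_inv, le_div_iff₀ hαγ]
        calc |x i| ^ γ * α ^ γ = (α * |x i|) ^ γ := by
              rw [Real.mul_rpow hα0.le (abs_nonneg _)]; ring
          _ ≤ |y i| ^ γ := Real.rpow_le_rpow (by positivity) hE hγ0.le
      · positivity
    calc W ≤ ∑' i, |y i| ^ γ * (α ^ γ)⁻¹ := Summable.tsum_le_tsum hwle2 hwsum (hy.mul_right _)
      _ = (∑' i, |y i| ^ γ) * (α ^ γ)⁻¹ := tsum_mul_right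
      _ ≤ β ^ γ * (α ^ γ)⁻¹ := by
          exact mul_le_mul_of_nonneg_right hUy (inv_nonneg.2 hαγ.le)
  set r : ℝ := (β / α) ^ γ with hr
  have hr_eq : r = β ^ γ * (α ^ γ)⁻¹ := by
    rw [hr, Real.div_rpow (by linarith : (0:ℝ) ≤ β) hα0.le, div_eq_mul_inv]
  have hhle : ∀ i, 2 * |x i| ^ γ + (K - 2) * (|x i| ^ γ - w i) ≤ L i := by
    intro i
    by_cases hE : α * |x i| ≤ |y i|
    · have : w i = |x i| ^ γ := by rw [hw]; dsimp only; rw [if_pos hE]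
      rw [this]
      simpa using hL2 i
    · have hw0 : w i = 0 := by rw [hw]; dsimp only; rw [if_neg hE]
      push_neg at hE
      have := hLK i hE
      rw [hw0]
      calc 2 * |x i| ^ γ + (K - 2) * (|x i| ^ γ - 0) = K * |x i| ^ γ := by ring
        _ ≤ L i := this
  have hvsum : Summable (fun i => |x i| ^ γ - w i) := hx.sub hwsum
  have hsum_h : Summable (fun i => 2 * |x i| ^ γ + (K - 2) * (|x i| ^ γ - w i)) :=
    (hx.mul_left 2).add (hvsum.mul_left _)
  have hsum_eval : ∑' i, (2 * |x i| ^ γ + (K - 2) * (|x i| ^ γ - w i))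
      = 2 + (K - 2) * (1 - W) := by
    rw [Summable.tsum_add (hx.mul_left 2) (hvsum.mul_left _), tsum_mul_left, tsum_mul_left,
      Summable.tsum_sub hx hwsum, hTx, ← hW]
    ring
  have htsum_ge : 2 + (K - 2) * (1 - W) ≤ ∑' i, L i :=
    hsum_eval ▸ Summable.tsum_le_tsum hhle hsum_h hLsum
  have hr1 : r < 1 := by
    rw [hr]
    exact Real.rpow_lt_one (by positivity) (by rw [div_lt_one hα0]; exact hβα) hγ0
  have hWr : W ≤ r := by rw [hr_eq]; exact hW_le
  have hA : Aconst α β γ = 2 + (K - 2) * (1 - r) := by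
    simp only [Aconst]; rw [← hc, ← hK, ← hr]; ring
  constructor
  · rw [hA]; nlinarith [hK2, hr1]
  · rw [hA]
    refine le_trans ?_ htsum_ge
    have : (K - 2) * (1 - r) ≤ (K - 2) * (1 - W) :=
      mul_le_mul_of_nonneg_left (by linarith) (by linarith)
    linarith
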